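/- If R ⊆ S are two finite-dimensional algebras over an infinite field F having the same degree (degree of the minimal CH-norm), then the minimal CH-norm of S restricted to R equals the minimal CH-norm of R. -/

import Mathlib

open TensorProduct

variable {F R ι : Type*}

/-- The polynomial function on `R` attached to a polynomial in the coordinates
along the basis `b`. -/
noncomputable def polyFun [Field F] [Ring R] [Algebra F R] [Fintype ι]
    (b : Module.Basis ι F R) (p : MvPolynomial ι F) : R → F :=
  fun r => MvPolynomial.eval (fun i => b.repr r i) p

/-- The abstract characteristic polynomial `χ_a(t) = N(t·1 - a)` of an element `a`,
for the polynomial map attached to `p`. -/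
noncomputable def charPolyOf [Field F] [Ring R] [Algebra F R] [Fintype ι]
    (b : Module.Basis ι F R) (p : MvPolynomial ι F) (a : R) : Polynomial F :=
  MvPolynomial.aeval
    (fun i => Polynomial.C (b.repr 1 i) * Polynomial.X - Polynomial.C (b.repr a i)) p

/-- `p` defines a Cayley–Hamilton norm of degree `n` on `R` (w.r.t. the basis `b`):
homogeneous of degree `n`, multiplicative, and every element satisfies its abstract
characteristic polynomial. -/
structure IsCHNorm [Field F] [Ring R] [Algebra F R] [Fintype ι]
    (b : Module.Basis ι F R) (n : ℕ) (p : MvPolynomial ι F) : Prop where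
  homog : ∀ (α : F) (r : R), polyFun b p (α • r) = α ^ n * polyFun b p r
  mult : ∀ x y : R, polyFun b p (x * y) = polyFun b p x * polyFun b p y
  ch : ∀ a : R, Polynomial.aeval a (charPolyOf b p a) = 0

/-- The generic element `x = Σ xᵢ aᵢ` of `R ⊗ K`, `K` the rational function field. -/
noncomputable def genElt [Field F] [Ring R] [Algebra F R] [Fintype ι] (b : Module.Basis ι F R) :
    FractionRing (MvPolynomial ι F) ⊗[F] R :=
  ∑ i, algebraMap (MvPolynomial ι F) (FractionRing (MvPolynomial ι F)) (MvPolynomial.X i)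
    ⊗ₜ[F] b i

set_option maxHeartbeats 10000000
set_option synthInstance.maxHeartbeats 2000000

/-- Auxiliary: pushing a polynomial evaluation through a pair of compatible ring homs. -/
lemma aeval_push {A B A2 B2 : Type*} [CommSemiring A] [Semiring B] [Algebra A B]
    [CommSemiring A2] [Semiring B2] [Algebra A2 B2] (f : A →+* A2) (g : B →+* B2)
    (h : ∀ a, g (algebraMap A B a) = algebraMap A2 B2 (f a)) (x : B) (P : Polynomial A) :
    g (Polynomial.aeval x P) = Polynomial.aeval (g x) (P.map f) := by
  rw [Polynomial.aeval_def, Polynomial.hom_eval₂, Polynomial.aeval_def, Polynomial.eval₂_map]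
  congr 1
  exact RingHom.ext h

/-- Auxiliary: a polynomial of degree smaller than the minimal polynomial which kills `x`
is zero. -/
lemma aeval_eq_zero_degree_lt {K B : Type*} [Field K] [Ring B] [Algebra K B] (x : B)
    (q : Polynomial K) (hdeg : q.degree < (minpoly K x).degree)
    (h0 : Polynomial.aeval x q = 0) : q = 0 := by
  by_contra hq
  have hm := Polynomial.monic_mul_leadingCoeff_inv hq
  have h1 : Polynomial.aeval x (q * Polynomial.C q.leadingCoeff⁻¹) = 0 := by
    rw [map_mul, h0, zero_mul]
  have h2 := minpoly.min K x hm h1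
  rw [Polynomial.degree_mul_leadingCoeff_inv _ hq] at h2
  exact absurd (lt_of_le_of_lt h2 hdeg) (lt_irrefl _)

/-- Auxiliary: a monic annihilating polynomial of the same degree as the minimal polynomial
is the minimal polynomial. -/
lemma eq_minpoly_of_monic {K B : Type*} [Field K] [Ring B] [Algebra K B] (x : B)
    (q : Polynomial K) (hq : q.Monic) (h0 : Polynomial.aeval x q = 0)
    (hd : q.natDegree = (minpoly K x).natDegree) : q = minpoly K x := by
  have hint : IsIntegral K x := ⟨q, hq, h0⟩
  have hm := minpoly.monic hint
  by_cases hD : q - minpoly K x = 0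
  · exact sub_eq_zero.mp hD
  · exfalso
    have hdeg : q.degree = (minpoly K x).degree := by
      rw [Polynomial.degree_eq_natDegree hq.ne_zero, Polynomial.degree_eq_natDegree hm.ne_zero, hd]
    have hlt : (q - minpoly K x).degree < (minpoly K x).degree := by
      rw [← hdeg]
      exact Polynomial.degree_sub_lt hdeg hq.ne_zero (by rw [hq.leadingCoeff, hm.leadingCoeff])
    exact hD (aeval_eq_zero_degree_lt x _ hlt (by rw [map_sub, h0, minpoly.aeval, sub_zero]))

/-- Auxiliary: the minimal polynomial of the generic element has a monic lift with polynomial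
coefficients, which annihilates the polynomial-coefficient generic element. -/
lemma exists_lift {F S κ : Type*} [Field F] [Ring S] [Algebra F S] [FiniteDimensional F S]
    [Fintype κ] (b : Module.Basis κ F S) :
    ∃ M : Polynomial (MvPolynomial κ F), M.Monic ∧
      M.map (algebraMap (MvPolynomial κ F) (FractionRing (MvPolynomial κ F))) =
        minpoly (FractionRing (MvPolynomial κ F)) (genElt b) ∧
      Polynomial.aeval (∑ j, MvPolynomial.X j ⊗ₜ[F] b j : MvPolynomial κ F ⊗[F] S) M = 0 := by
  set A' := MvPolynomial κ F
  set K' := FractionRing A'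
  set ιT : A' ⊗[F] S →ₐ[F] K' ⊗[F] S :=
    Algebra.TensorProduct.map (IsScalarTower.toAlgHom F A' K') (AlgHom.id F S) with hιT
  have hinj : Function.Injective ιT := by
    have h1 : Function.Injective ((IsScalarTower.toAlgHom F A' K').toLinearMap) :=
      IsFractionRing.injective A' K'
    have h2 := Module.Flat.rTensor_preserves_injective_linearMap (M := S)
      ((IsScalarTower.toAlgHom F A' K').toLinearMap) h1
    have heq : ⇑ιT = ⇑(LinearMap.rTensor S ((IsScalarTower.toAlgHom F A' K').toLinearMap)) := by
      funext x
      induction x using TensorProduct.induction_on with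
      | zero => simp
      | tmul a s => simp [hιT, Algebra.TensorProduct.map_tmul]
      | add u v hu hv => simp only [map_add, hu, hv]
    rw [heq]; exact h2
  have hcomm : ∀ a : A', ιT (algebraMap A' (A' ⊗[F] S) a) =
      algebraMap K' (K' ⊗[F] S) (algebraMap A' K' a) := by
    intro a
    rw [Algebra.TensorProduct.algebraMap_apply, Algebra.TensorProduct.algebraMap_apply]
    simp [hιT]
  set x₀ : A' ⊗[F] S := ∑ j, MvPolynomial.X j ⊗ₜ[F] b j with hx₀def
  have hx₀ : ιT x₀ = genElt b := by
    simp [hιT, hx₀def, genElt, map_sum]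
    rfl
  letI bA : Module.Basis κ A' (A' ⊗[F] S) := Algebra.TensorProduct.basis A' b
  haveI : Module.Free A' (A' ⊗[F] S) := Module.Free.of_basis bA
  haveI : Module.Finite A' (A' ⊗[F] S) := Module.Finite.of_basis bA
  set χ := (Algebra.lmul A' (A' ⊗[F] S) x₀ : Module.End A' (A' ⊗[F] S)).charpoly with hχ
  have hχmonic : χ.Monic := LinearMap.charpoly_monic _
  have h2 : Polynomial.aeval x₀ χ = 0 := by
    apply Algebra.lmul_injective (R := A')
    rw [map_zero, ← Polynomial.aeval_algHom_apply]
    exact LinearMap.aeval_self_charpoly _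
  have h3 : Polynomial.aeval (genElt b) (χ.map (algebraMap A' K')) = 0 := by
    have h' := aeval_push (algebraMap A' K') ιT.toRingHom hcomm x₀ χ
    have h'' : ιT (Polynomial.aeval x₀ χ) =
        Polynomial.aeval (ιT x₀) (χ.map (algebraMap A' K')) := h'
    rw [h2, map_zero, hx₀] at h''
    exact h''.symm
  have hint : IsIntegral K' (genElt b) := IsIntegral.of_finite K' (genElt b)
  have hmon := minpoly.monic hint
  have hdvd : minpoly K' (genElt b) ∣ χ.map (algebraMap A' K') := by
    rw [← Polynomial.modByMonic_eq_zero_iff_dvd hmon]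
    have heq := Polynomial.modByMonic_add_div (χ.map (algebraMap A' K')) (minpoly K' (genElt b))
    have hrem : Polynomial.aeval (genElt b)
        (χ.map (algebraMap A' K') %ₘ minpoly K' (genElt b)) = 0 := by
      have hma : Polynomial.aeval (genElt b) (minpoly K' (genElt b)) = 0 :=
        minpoly.aeval K' (genElt b)
      rw [← heq, map_add, map_mul, hma, zero_mul, add_zero] at h3
      exact h3
    exact aeval_eq_zero_degree_lt _ _ (Polynomial.degree_modByMonic_lt _ hmon) hrem
  obtain ⟨M, hM⟩ := IsIntegrallyClosed.eq_map_mul_C_of_dvd (K := K') hχmonic hdvd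
  rw [hmon.leadingCoeff, Polynomial.C_1, mul_one] at hM
  have hMmonic : M.Monic :=
    Polynomial.monic_of_injective (IsFractionRing.injective A' K') (by rw [hM]; exact hmon)
  refine ⟨M, hMmonic, hM, hinj ?_⟩
  have h' := aeval_push (algebraMap A' K') ιT.toRingHom hcomm x₀ M
  have h'' : ιT (Polynomial.aeval x₀ M) =
      Polynomial.aeval (ιT x₀) (M.map (algebraMap A' K')) := h'
  rw [hx₀, hM] at h''
  rw [h'', minpoly.aeval K' (genElt b), map_zero]

/-- If `R ⊆ S` are two finite-dimensional algebras of the same degree, the minimal CH-norm of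
`S` restricted to `R` is the minimal CH-norm of `R`. The minimal CH-norms are written as
`(-1)^k P(0)` for `P` the minimal polynomial of the respective generic elements. -/
theorem stmt10 {S κ : Type*} [Field F] [Infinite F]
    [Ring R] [Algebra F R] [FiniteDimensional F R] [Fintype ι] (bR : Module.Basis ι F R)
    [Ring S] [Algebra F S] [FiniteDimensional F S] [Fintype κ] (bS : Module.Basis κ F S)
    (φ : R →ₐ[F] S) (hφ : Function.Injective φ)
    (hdeg : (minpoly (FractionRing (MvPolynomial ι F)) (genElt bR)).natDegree =
      (minpoly (FractionRing (MvPolynomial κ F)) (genElt bS)).natDegree)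
    (pR : MvPolynomial ι F)
    (hpR : algebraMap (MvPolynomial ι F) (FractionRing (MvPolynomial ι F)) pR =
      (-1) ^ (minpoly (FractionRing (MvPolynomial ι F)) (genElt bR)).natDegree *
        (minpoly (FractionRing (MvPolynomial ι F)) (genElt bR)).coeff 0)
    (pS : MvPolynomial κ F)
    (hpS : algebraMap (MvPolynomial κ F) (FractionRing (MvPolynomial κ F)) pS =
      (-1) ^ (minpoly (FractionRing (MvPolynomial κ F)) (genElt bS)).natDegree *
        (minpoly (FractionRing (MvPolynomial κ F)) (genElt bS)).coeff 0) :
    ∀ r : R, polyFun bS pS (φ r) = polyFun bR pR r := by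
  classical
  set L : κ → MvPolynomial ι F :=
    fun j => ∑ i, MvPolynomial.C (bS.repr (φ (bR i)) j) * MvPolynomial.X i with hL
  set σ : MvPolynomial κ F →ₐ[F] MvPolynomial ι F := MvPolynomial.aeval L with hσ
  set σK : MvPolynomial κ F →+* FractionRing (MvPolynomial ι F) :=
    (algebraMap (MvPolynomial ι F) (FractionRing (MvPolynomial ι F))).comp σ.toRingHom with hσK
  set ε : MvPolynomial κ F ⊗[F] S →ₐ[F] FractionRing (MvPolynomial ι F) ⊗[F] S :=
    Algebra.TensorProduct.map
      ((IsScalarTower.toAlgHom F (MvPolynomial ι F) (FractionRing (MvPolynomial ι F))).comp σ)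
      (AlgHom.id F S) with hε
  set Φ : FractionRing (MvPolynomial ι F) ⊗[F] R →ₐ[FractionRing (MvPolynomial ι F)]
      FractionRing (MvPolynomial ι F) ⊗[F] S :=
    Algebra.TensorProduct.map
      (AlgHom.id (FractionRing (MvPolynomial ι F)) (FractionRing (MvPolynomial ι F))) φ with hΦ
  have hΦinj : Function.Injective Φ := by
    have h2 := Module.Flat.lTensor_preserves_injective_linearMap
      (M := FractionRing (MvPolynomial ι F)) φ.toLinearMap hφ
    have heq : ⇑Φ = ⇑(LinearMap.lTensor (FractionRing (MvPolynomial ι F)) φ.toLinearMap) := by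
      funext x
      induction x using TensorProduct.induction_on with
      | zero => simp
      | tmul a s => simp [hΦ]
      | add u v hu hv => simp only [map_add, hu, hv]
    rw [heq]; exact h2
  have hεcomm : ∀ a : MvPolynomial κ F,
      ε (algebraMap (MvPolynomial κ F) (MvPolynomial κ F ⊗[F] S) a) =
      algebraMap (FractionRing (MvPolynomial ι F))
        (FractionRing (MvPolynomial ι F) ⊗[F] S) (σK a) := by
    intro a
    rw [Algebra.TensorProduct.algebraMap_apply, Algebra.TensorProduct.algebraMap_apply]
    simp only [hε, Algebra.TensorProduct.map_tmul, AlgHom.comp_apply, AlgHom.coe_id, id_eq,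
      IsScalarTower.coe_toAlgHom', hσK, RingHom.comp_apply, AlgHom.coe_toRingHom]
    simp
  have hgen : ε (∑ j, MvPolynomial.X j ⊗ₜ[F] bS j) = Φ (genElt bR) := by
    have step1 : ε (∑ j, MvPolynomial.X j ⊗ₜ[F] bS j)
        = ∑ j, (algebraMap (MvPolynomial ι F) (FractionRing (MvPolynomial ι F)) (L j))
            ⊗ₜ[F] bS j := by
      simp only [hε, map_sum, Algebra.TensorProduct.map_tmul, AlgHom.comp_apply,
        AlgHom.coe_id, id_eq, IsScalarTower.coe_toAlgHom', hσ, MvPolynomial.aeval_X]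
    have step2 : ∀ j, (algebraMap (MvPolynomial ι F) (FractionRing (MvPolynomial ι F)) (L j))
            ⊗ₜ[F] bS j
        = ∑ i, algebraMap (MvPolynomial ι F) (FractionRing (MvPolynomial ι F))
            (MvPolynomial.X i) ⊗ₜ[F] ((bS.repr (φ (bR i)) j : F) • bS j) := by
      intro j
      rw [hL]
      simp only [map_sum, map_mul, TensorProduct.sum_tmul]
      congr 1; funext i
      rw [← MvPolynomial.algebraMap_eq, ← IsScalarTower.algebraMap_apply,
        ← Algebra.smul_def, TensorProduct.smul_tmul]
    have step3 : Φ (genElt bR)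
        = ∑ i, ∑ j, algebraMap (MvPolynomial ι F) (FractionRing (MvPolynomial ι F))
            (MvPolynomial.X i) ⊗ₜ[F] ((bS.repr (φ (bR i)) j : F) • bS j) := by
      rw [hΦ, genElt, map_sum]
      congr 1; funext i
      rw [Algebra.TensorProduct.map_tmul]
      rw [show φ (bR i) = ∑ j, (bS.repr (φ (bR i)) j : F) • bS j from (bS.sum_repr _).symm]
      rw [TensorProduct.tmul_sum]
      simp
    rw [step1, step3, Finset.sum_comm]
    congr 1; funext j
    exact step2 j
  obtain ⟨MS, hMSmonic, hMSmap, hMSaeval⟩ := exists_lift bS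
  have hQaeval : Polynomial.aeval (Φ (genElt bR)) (MS.map σK) = 0 := by
    have h' := aeval_push σK ε.toRingHom hεcomm (∑ j, MvPolynomial.X j ⊗ₜ[F] bS j) MS
    have h'' : ε (Polynomial.aeval (∑ j, MvPolynomial.X j ⊗ₜ[F] bS j) MS)
        = Polynomial.aeval (ε (∑ j, MvPolynomial.X j ⊗ₜ[F] bS j)) (MS.map σK) := h'
    rw [hMSaeval, map_zero, hgen] at h''
    exact h''.symm
  have hQmonic : (MS.map σK).Monic := hMSmonic.map σK
  have hmindeg : MS.natDegree
      = (minpoly (FractionRing (MvPolynomial κ F)) (genElt bS)).natDegree := by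
    rw [← hMSmap, Polynomial.Monic.natDegree_map hMSmonic]
  have hQdeg : (MS.map σK).natDegree
      = (minpoly (FractionRing (MvPolynomial ι F)) (Φ (genElt bR))).natDegree := by
    rw [minpoly.algHom_eq Φ hΦinj, Polynomial.Monic.natDegree_map hMSmonic, hmindeg, ← hdeg]
  have hQ : MS.map σK = minpoly (FractionRing (MvPolynomial ι F)) (genElt bR) := by
    rw [← minpoly.algHom_eq Φ hΦinj (genElt bR)]
    exact eq_minpoly_of_monic _ _ hQmonic hQaeval hQdeg
  have hMS0 : MS.coeff 0
      = (-1) ^ (minpoly (FractionRing (MvPolynomial κ F)) (genElt bS)).natDegree * pS := by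
    apply IsFractionRing.injective (MvPolynomial κ F) (FractionRing (MvPolynomial κ F))
    have hc0 : algebraMap (MvPolynomial κ F) (FractionRing (MvPolynomial κ F)) (MS.coeff 0)
        = (minpoly (FractionRing (MvPolynomial κ F)) (genElt bS)).coeff 0 := by
      rw [← hMSmap, Polynomial.coeff_map]
    rw [hc0, map_mul, map_pow, map_neg, map_one, hpS, ← mul_assoc, ← mul_pow, neg_mul_neg,
      one_mul, one_pow, one_mul]
  have hσpS : pR = σ pS := by
    apply IsFractionRing.injective (MvPolynomial ι F) (FractionRing (MvPolynomial ι F))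
    rw [hpR]
    have h0 : (minpoly (FractionRing (MvPolynomial ι F)) (genElt bR)).coeff 0
        = σK (MS.coeff 0) := by
      rw [← hQ, Polynomial.coeff_map]
    rw [h0, hMS0, map_mul, map_pow, map_neg, map_one, hdeg, ← mul_assoc, ← mul_pow,
      neg_mul_neg, one_mul, one_pow, one_mul]
    rfl
  intro r
  have hcoord : ∀ j, (bS.repr (φ r) j : F)
      = ∑ i, (bR.repr r i : F) * (bS.repr (φ (bR i)) j : F) := by
    intro j
    have hr : φ r = ∑ i, (bR.repr r i : F) • φ (bR i) := by
      conv_lhs => rw [← bR.sum_repr r]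
      rw [map_sum]
      simp [map_smul]
    rw [hr, map_sum, Finset.sum_apply']
    simp
  show MvPolynomial.eval (fun j => (bS.repr (φ r) j : F)) pS
      = MvPolynomial.eval (fun i => (bR.repr r i : F)) pR
  rw [hσpS, hσ]
  rw [MvPolynomial.aeval_def, MvPolynomial.eval₂_comp_left
    (MvPolynomial.eval (fun i => (bR.repr r i : F)))
    (algebraMap F (MvPolynomial ι F)) L pS]
  have hcompid : (MvPolynomial.eval (fun i => (bR.repr r i : F))).comp
      (algebraMap F (MvPolynomial ι F)) = RingHom.id F := by
    ext a
    simp [MvPolynomial.algebraMap_eq]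
  rw [hcompid]
  have heval₂ : MvPolynomial.eval₂ (RingHom.id F)
      ((MvPolynomial.eval fun i => (bR.repr r i : F)) ∘ L) pS
      = MvPolynomial.eval ((MvPolynomial.eval fun i => (bR.repr r i : F)) ∘ L) pS := rfl
  rw [heval₂]
  have hfun : (fun j => (bS.repr (φ r) j : F))
      = ((MvPolynomial.eval fun i => (bR.repr r i : F)) ∘ L) := by
    funext j
    rw [Function.comp_apply, hL]
    simp only [map_sum, MvPolynomial.eval_mul, MvPolynomial.eval_C, MvPolynomial.eval_X]
    rw [hcoord j]
    exact Finset.sum_congr rfl fun i _ => mul_comm _ _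
  rw [hfun]
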